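/- (Global rephasing channel.) Fix q ∈ [-1,1] and define the 8 two-qubit Kraus operators K_{1,±} = √((1±q)/2)·|Φ±⟩⟨00|, K_{2,±} = √((1±q)/2)·|Ψ±⟩⟨01|, K_{3,±} = √((1±q)/2)·|Ψ±⟩⟨10|, K_{4,±} = √((1±q)/2)·|Φ±⟩⟨11|, where |Φ±⟩ = (|00⟩ ± |11⟩)/√2 and |Ψ±⟩ = (|01⟩ ± |10⟩)/√2 are the Bell states. Then (1) ∑_{i,±} K_{i,±}† K_{i,±} = I4, so Λ^q_{GR3}(X) = ∑_{i,±} K_{i,±} X K_{i,±}† is a CPTP map; and (2) for every two-qubit density matrix ρ, Λ^q_{GR3}(ρ) = ρ(q, -q·T33, T33), the Bell-diagonal state on the phase-flip freezing surface with T33 = Tr[(σ3⊗σ3)·ρ]. In particular, Λ^q_{GR3}(ρ(c1, -c1·c3, c3)) = ρ(q, -q·c3, c3) for all c1, c3 ∈ [-1,1]. -/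

import Mathlib

open Matrix Kronecker
open scoped ComplexOrder

noncomputable section

/-- 2×2 complex matrices (single-qubit operators). -/
abbrev Mat2 := Matrix (Fin 2) (Fin 2) ℂ

/-- 4×4 complex matrices (two-qubit operators), indexed by `Fin 2 × Fin 2`. -/
abbrev Mat4 := Matrix (Fin 2 × Fin 2) (Fin 2 × Fin 2) ℂ

/-- Pauli matrix σ₁ (x). -/
def σ1 : Mat2 := !![0, 1; 1, 0]

/-- Pauli matrix σ₂ (y). -/
def σ2 : Mat2 := !![0, -Complex.I; Complex.I, 0]

/-- Pauli matrix σ₃ (z). -/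
def σ3 : Mat2 := !![1, 0; 0, -1]

/-- The Bell-diagonal state ρ(c1,c2,c3) = (1/4)(I₄ + c1 σ₁⊗σ₁ + c2 σ₂⊗σ₂ + c3 σ₃⊗σ₃). -/
def BD (c1 c2 c3 : ℝ) : Mat4 :=
  (1 / 4 : ℂ) • ((1 : Mat4) + (c1 : ℂ) • (σ1 ⊗ₖ σ1) + (c2 : ℂ) • (σ2 ⊗ₖ σ2)
    + (c3 : ℂ) • (σ3 ⊗ₖ σ3))

/-- A two-qubit density matrix: positive semidefinite with unit trace. -/
def IsDensityMatrix (ρ : Mat4) : Prop := ρ.PosSemidef ∧ ρ.trace = 1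

/-- A CPTP map given by finitely many Kraus operators. -/
def IsCPTP (Λ : Mat4 → Mat4) : Prop :=
  ∃ (n : ℕ) (K : Fin n → Mat4),
    (∑ i, (K i)ᴴ * K i) = 1 ∧ ∀ X, Λ X = ∑ i, K i * X * (K i)ᴴ

/-- A distance `D` is contractive if it contracts under every CPTP map. -/
def Contractive (D : Mat4 → Mat4 → ℝ) : Prop :=
  ∀ Λ : Mat4 → Mat4, IsCPTP Λ → ∀ ρ σ : Mat4,
    IsDensityMatrix ρ → IsDensityMatrix σ → D (Λ ρ) (Λ σ) ≤ D ρ σ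

/-- A distance `D` is invariant under transposition. -/
def TransposeInvariant (D : Mat4 → Mat4 → ℝ) : Prop :=
  ∀ ρ σ : Mat4, IsDensityMatrix ρ → IsDensityMatrix σ → D ρᵀ σᵀ = D ρ σ

/-- A distance `D` is jointly convex. -/
def JointlyConvex (D : Mat4 → Mat4 → ℝ) : Prop :=
  ∀ q : ℝ, 0 ≤ q → q ≤ 1 → ∀ ρ σ τ ς : Mat4,
    IsDensityMatrix ρ → IsDensityMatrix σ → IsDensityMatrix τ → IsDensityMatrix ς →
    D (q • ρ + (1 - q) • σ) (q • τ + (1 - q) • ς) ≤ q * D ρ τ + (1 - q) * D σ ς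

/-- A classical-classical two-qubit state: ∑ᵢⱼ pᵢⱼ |aᵢ⟩⟨aᵢ| ⊗ |bⱼ⟩⟨bⱼ| with (pᵢⱼ) a
probability distribution and {aᵢ}, {bⱼ} orthonormal bases of ℂ². -/
def IsClassical (χ : Mat4) : Prop :=
  ∃ (p : Fin 2 → Fin 2 → ℝ) (a b : Fin 2 → Fin 2 → ℂ),
    (∀ i j, 0 ≤ p i j) ∧ (∑ i, ∑ j, p i j = 1) ∧
    (∀ i i', ∑ k, (starRingEnd ℂ) (a i k) * a i' k = if i = i' then 1 else 0) ∧
    (∀ j j', ∑ k, (starRingEnd ℂ) (b j k) * b j' k = if j = j' then 1 else 0) ∧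
    χ = ∑ i, ∑ j, (p i j : ℂ) •
      (Matrix.vecMulVec (a i) (star (a i)) ⊗ₖ Matrix.vecMulVec (b j) (star (b j)))

/-- Membership in the tetrahedron of Bell-diagonal states. -/
def InTetra (c : ℝ × ℝ × ℝ) : Prop :=
  c ∈ convexHull ℝ
    ({((1 : ℝ), (-1 : ℝ), (1 : ℝ)), ((-1 : ℝ), (1 : ℝ), (1 : ℝ)),
      ((1 : ℝ), (1 : ℝ), (-1 : ℝ)), ((-1 : ℝ), (-1 : ℝ), (-1 : ℝ))} : Set (ℝ × ℝ × ℝ))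

/-- Geometric discord: distance to the set of classical states. -/
def QD (D : Mat4 → Mat4 → ℝ) (ρ : Mat4) : ℝ :=
  sInf {x : ℝ | ∃ χ : Mat4, IsClassical χ ∧ x = D ρ χ}

/-- The Pauli matrices, indexed. -/
def pauli : Fin 3 → Mat2 := ![σ1, σ2, σ3]

/-- Computational basis vector |ij⟩ of ℂ²⊗ℂ². -/
def e (i j : Fin 2) : Fin 2 × Fin 2 → ℂ := fun x => if x = (i, j) then 1 else 0

/-- Sign ±1 (complex), indexed by `Fin 2` (0 ↦ +, 1 ↦ −). -/
def sgnC : Fin 2 → ℂ := ![1, -1]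

/-- Sign ±1 (real), indexed by `Fin 2` (0 ↦ +, 1 ↦ −). -/
def sgnR : Fin 2 → ℝ := ![1, -1]

/-- The Bell states used by the Kraus operators of the global rephasing channel:
Φ± for i = 0, 3 and Ψ± for i = 1, 2. -/
def bellvec (i : Fin 4) (ε : Fin 2) : Fin 2 × Fin 2 → ℂ :=
  (((Real.sqrt 2)⁻¹ : ℝ) : ℂ) •
    (![e 0 0 + sgnC ε • e 1 1, e 0 1 + sgnC ε • e 1 0,
       e 0 1 + sgnC ε • e 1 0, e 0 0 + sgnC ε • e 1 1] i)

/-- The computational basis vectors |00⟩, |01⟩, |10⟩, |11⟩. -/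
def basevec : Fin 4 → (Fin 2 × Fin 2 → ℂ) := ![e 0 0, e 0 1, e 1 0, e 1 1]

/-- The Kraus operators K_{i,±} = √((1±q)/2)·|Bell⟩⟨base| of the global rephasing
channel Λ^q_{GR3}. -/
def grK (q : ℝ) (i : Fin 4) (ε : Fin 2) : Mat4 :=
  ((Real.sqrt ((1 + sgnR ε * q) / 2) : ℝ) : ℂ) •
    Matrix.vecMulVec (bellvec i ε) (star (basevec i))

/-- The global rephasing channel Λ^q_{GR3}. -/
def GR (q : ℝ) (X : Mat4) : Mat4 :=
  ∑ i : Fin 4, ∑ ε : Fin 2, grK q i ε * X * (grK q i ε)ᴴ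

/-- The correlation function T₃₃ = Tr[(σ₃⊗σ₃)ρ]. -/
def T33 (ρ : Mat4) : ℝ := (((σ3 ⊗ₖ σ3) * ρ).trace).re


section Aux

set_option linter.unusedSectionVars false

variable {ι : Type*} [Fintype ι]

lemma vmv_conjT (u v : ι → ℂ) : (vecMulVec u v)ᴴ = vecMulVec (star v) (star u) := by
  ext x y; simp [vecMulVec_apply, conjTranspose_apply, mul_comm]

lemma vmv_mul (u v : ι → ℂ) (ρ : Matrix ι ι ℂ) :
    vecMulVec u v * ρ = vecMulVec u (v ᵥ* ρ) := by
  ext x y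
  simp only [mul_apply, vecMulVec_apply, vecMul, dotProduct, Finset.mul_sum]
  exact Finset.sum_congr rfl fun k _ => by ring

lemma vmv_mul_vmv (u v w z : ι → ℂ) :
    vecMulVec u v * vecMulVec w z = (v ⬝ᵥ w) • vecMulVec u z := by
  ext x y
  simp only [mul_apply, vecMulVec_apply, dotProduct, Matrix.smul_apply, smul_eq_mul,
    Finset.sum_mul]
  exact Finset.sum_congr rfl fun k _ => by ring

lemma sqrt2sq : ((Real.sqrt 2 : ℝ) : ℂ) ^ 2 = 2 := by
  rw [← Complex.ofReal_pow, Real.sq_sqrt (by norm_num : (0:ℝ) ≤ 2)]; norm_num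

lemma bell_norm (i : Fin 4) (ε : Fin 2) : star (bellvec i ε) ⬝ᵥ bellvec i ε = 1 := by
  fin_cases i <;> fin_cases ε <;>
    simp [bellvec, e, sgnC, dotProduct, Fintype.sum_prod_type, Fin.sum_univ_two,
      Pi.star_apply, mul_add, add_mul] <;>
    ring_nf <;> simp [inv_pow, sqrt2sq]

lemma sum_base : ∑ i : Fin 4, vecMulVec (basevec i) (star (basevec i)) = (1 : Mat4) := by
  ext ⟨a,b⟩ ⟨c,d⟩
  fin_cases a <;> fin_cases b <;> fin_cases c <;> fin_cases d <;>
    simp [basevec, e, vecMulVec_apply, Fin.sum_univ_four, Matrix.sum_apply, one_apply,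
      Pi.star_apply, Prod.ext_iff, vecHead, vecTail]

lemma hsq {q : ℝ} (hq : q ∈ Set.Icc (-1:ℝ) 1) (ε : Fin 2) :
    ((Real.sqrt ((1 + sgnR ε * q) / 2) : ℝ) : ℂ) *
      ((Real.sqrt ((1 + sgnR ε * q) / 2) : ℝ) : ℂ) = (((1 + sgnR ε * q) / 2 : ℝ) : ℂ) := by
  rw [← Complex.ofReal_mul, Real.mul_self_sqrt]
  fin_cases ε <;> simp [sgnR] <;> linarith [hq.1, hq.2]

lemma krausKK {q : ℝ} (hq : q ∈ Set.Icc (-1:ℝ) 1) (i : Fin 4) (ε : Fin 2) :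
    (grK q i ε)ᴴ * grK q i ε
      = (((1 + sgnR ε * q) / 2 : ℝ) : ℂ) • vecMulVec (basevec i) (star (basevec i)) := by
  rw [grK, conjTranspose_smul, vmv_conjT, star_star]
  rw [Matrix.smul_mul, Matrix.mul_smul, smul_smul, vmv_mul_vmv, bell_norm, one_smul]
  rw [RCLike.star_def, Complex.conj_ofReal, hsq hq]

lemma kraus_sum {q : ℝ} (hq : q ∈ Set.Icc (-1:ℝ) 1) :
    ∑ i : Fin 4, ∑ ε : Fin 2, (grK q i ε)ᴴ * grK q i ε = 1 := by
  calc ∑ i : Fin 4, ∑ ε : Fin 2, (grK q i ε)ᴴ * grK q i ε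
      = ∑ i : Fin 4, vecMulVec (basevec i) (star (basevec i)) := by
        refine Finset.sum_congr rfl fun i _ => ?_
        rw [Fin.sum_univ_two, krausKK hq, krausKK hq, ← add_smul]
        rw [show ((((1 + sgnR 0 * q)/2 : ℝ):ℂ) + (((1 + sgnR 1 * q)/2 : ℝ):ℂ)) = 1 by
          simp [sgnR]; ring, one_smul]
    _ = 1 := sum_base

lemma krausKXK {q : ℝ} (hq : q ∈ Set.Icc (-1:ℝ) 1) (i : Fin 4) (ε : Fin 2) (ρ : Mat4) :
    grK q i ε * ρ * (grK q i ε)ᴴ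
      = ((((1 + sgnR ε * q) / 2 : ℝ) : ℂ) * ((star (basevec i) ᵥ* ρ) ⬝ᵥ basevec i)) •
        vecMulVec (bellvec i ε) (star (bellvec i ε)) := by
  rw [grK, conjTranspose_smul, vmv_conjT, star_star]
  rw [Matrix.smul_mul, Matrix.smul_mul, Matrix.mul_smul, smul_smul, vmv_mul,
    vmv_mul_vmv, smul_smul]
  rw [RCLike.star_def, Complex.conj_ofReal, hsq hq]

lemma base_dot (ρ : Mat4) (i : Fin 4) :
    (star (basevec i) ᵥ* ρ) ⬝ᵥ basevec i
      = ρ (![(0,0),(0,1),(1,0),(1,1)] i) (![(0,0),(0,1),(1,0),(1,1)] i) := by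
  fin_cases i <;>
    simp [basevec, e, vecMul, dotProduct, Fintype.sum_prod_type, Fin.sum_univ_two,
      Pi.star_apply, Prod.ext_iff]

set_option maxHeartbeats 2000000 in
lemma main_sum (q t : ℝ) (a b c d : ℂ) (htr : a + b + c + d = 1)
    (ht : (t:ℂ) = a - b - c + d) :
    ∑ i : Fin 4, ∑ ε : Fin 2,
      ((((1 + sgnR ε * q)/2 : ℝ):ℂ) * (![a,b,c,d] i)) •
        vecMulVec (bellvec i ε) (star (bellvec i ε))
      = BD q (-(q*t)) t := by
  have hd : d = 1 - a - b - c := by linear_combination htr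
  subst hd
  ext ⟨x1,x2⟩ ⟨y1,y2⟩
  fin_cases x1 <;> fin_cases x2 <;> fin_cases y1 <;> fin_cases y2 <;>
    simp [BD, σ1, σ2, σ3, bellvec, e, sgnC, sgnR, Matrix.sum_apply, vecMulVec_apply,
      Fin.sum_univ_four, Fin.sum_univ_two, one_apply, kroneckerMap_apply, Pi.star_apply,
      Prod.ext_iff, Matrix.add_apply, Matrix.smul_apply, vecHead, vecTail] <;>
    push_cast <;>
    (try rw [ht]) <;> ring_nf <;> (try simp [inv_pow, sqrt2sq]) <;> try ring_nf

lemma GR_eq {q : ℝ} (hq : q ∈ Set.Icc (-1:ℝ) 1) (ρ : Mat4) :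
    GR q ρ = ∑ i : Fin 4, ∑ ε : Fin 2,
      ((((1 + sgnR ε * q)/2 : ℝ):ℂ) *
        (![ρ (0,0) (0,0), ρ (0,1) (0,1), ρ (1,0) (1,0), ρ (1,1) (1,1)] i)) •
        vecMulVec (bellvec i ε) (star (bellvec i ε)) := by
  rw [GR]
  refine Finset.sum_congr rfl fun i _ => Finset.sum_congr rfl fun ε _ => ?_
  rw [krausKXK hq, base_dot]
  congr 1
  fin_cases i <;> simp

lemma GR_BD {q : ℝ} (hq : q ∈ Set.Icc (-1:ℝ) 1) (t : ℝ) (ρ : Mat4)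
    (htr : ρ (0,0) (0,0) + ρ (0,1) (0,1) + ρ (1,0) (1,0) + ρ (1,1) (1,1) = 1)
    (ht : (t:ℂ) = ρ (0,0) (0,0) - ρ (0,1) (0,1) - ρ (1,0) (1,0) + ρ (1,1) (1,1)) :
    GR q ρ = BD q (-(q*t)) t := by
  rw [GR_eq hq, main_sum q t _ _ _ _ htr ht]

end Aux

/-- Global rephasing channel: the K_{i,±} form a valid Kraus decomposition,
Λ^q_{GR3} is CPTP, it maps every density matrix onto the phase-flip freezing surface,
and in particular Λ^q_{GR3}(ρ(c1,-c1·c3,c3)) = ρ(q,-q·c3,c3). -/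
theorem global_rephasing_channel (q : ℝ) (hq : q ∈ Set.Icc (-1 : ℝ) 1) :
    (∑ i : Fin 4, ∑ ε : Fin 2, (grK q i ε)ᴴ * grK q i ε = 1) ∧
    IsCPTP (GR q) ∧
    (∀ ρ : Mat4, IsDensityMatrix ρ → GR q ρ = BD q (-(q * T33 ρ)) (T33 ρ)) ∧
    (∀ c1 c3 : ℝ, c1 ∈ Set.Icc (-1 : ℝ) 1 → c3 ∈ Set.Icc (-1 : ℝ) 1 →
      GR q (BD c1 (-(c1 * c3)) c3) = BD q (-(q * c3)) c3) := by
  obtain ⟨hq1, hq2⟩ := hq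
  have hq' : q ∈ Set.Icc (-1:ℝ) 1 := ⟨hq1, hq2⟩
  refine ⟨kraus_sum hq', ?_, ?_, ?_⟩
  · refine ⟨8, fun k => grK q ((finProdFinEquiv (m := 4) (n := 2)).symm k).1 ((finProdFinEquiv (m := 4) (n := 2)).symm k).2, ?_, ?_⟩
    · have h1 := Equiv.sum_comp ((finProdFinEquiv (m := 4) (n := 2)).symm : Fin 8 ≃ Fin 4 × Fin 2)
        (fun p : Fin 4 × Fin 2 => (grK q p.1 p.2)ᴴ * grK q p.1 p.2)
      have h2 : ∑ p : Fin 4 × Fin 2, ((grK q p.1 p.2)ᴴ * grK q p.1 p.2) = 1 := by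
        rw [Fintype.sum_prod_type]; exact kraus_sum hq'
      exact h1.trans h2
    · intro X
      have h1 := Equiv.sum_comp ((finProdFinEquiv (m := 4) (n := 2)).symm : Fin 8 ≃ Fin 4 × Fin 2)
        (fun p : Fin 4 × Fin 2 => grK q p.1 p.2 * X * (grK q p.1 p.2)ᴴ)
      have h2 := Fintype.sum_prod_type
        (f := fun p : Fin 4 × Fin 2 => grK q p.1 p.2 * X * (grK q p.1 p.2)ᴴ)
      rw [GR]
      exact h2.symm.trans h1.symm
  · intro ρ hρ
    have hH : ρᴴ = ρ := hρ.1.1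
    have hherm : ∀ x : Fin 2 × Fin 2, (starRingEnd ℂ) (ρ x x) = ρ x x := by
      intro x
      have := congrFun (congrFun hH x) x
      rwa [conjTranspose_apply, Complex.star_def] at this
    have htr : ρ (0,0) (0,0) + ρ (0,1) (0,1) + ρ (1,0) (1,0) + ρ (1,1) (1,1) = 1 := by
      have h1 : ρ.trace
          = ρ (0,0) (0,0) + ρ (0,1) (0,1) + ρ (1,0) (1,0) + ρ (1,1) (1,1) := by
        simp [Matrix.trace, Matrix.diag, Fintype.sum_prod_type, Fin.sum_univ_two]
        ring
      rw [← h1, hρ.2]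
    have hS : ((σ3 ⊗ₖ σ3) * ρ).trace
        = ρ (0,0) (0,0) - ρ (0,1) (0,1) - ρ (1,0) (1,0) + ρ (1,1) (1,1) := by
      simp [Matrix.trace, Matrix.diag, Matrix.mul_apply, Fintype.sum_prod_type,
        Fin.sum_univ_two, σ3, kroneckerMap_apply]
      ring
    have hreal : (starRingEnd ℂ) (((σ3 ⊗ₖ σ3) * ρ).trace) = ((σ3 ⊗ₖ σ3) * ρ).trace := by
      rw [hS]
      simp only [map_add, map_sub]
      rw [hherm, hherm, hherm, hherm]
    have ht : ((T33 ρ : ℝ) : ℂ)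
        = ρ (0,0) (0,0) - ρ (0,1) (0,1) - ρ (1,0) (1,0) + ρ (1,1) (1,1) := by
      rw [T33]
      rw [Complex.conj_eq_iff_re.mp hreal]
      exact hS
    exact GR_BD hq' (T33 ρ) ρ htr ht
  · intro c1 c3 _ _
    set ρ := BD c1 (-(c1 * c3)) c3 with hρdef
    have hA : ρ (0,0) (0,0) = (1 + (c3:ℂ))/4 := by
      simp [hρdef, BD, σ1, σ2, σ3, one_apply, kroneckerMap_apply]
      ring
    have hB : ρ (0,1) (0,1) = (1 - (c3:ℂ))/4 := by
      simp [hρdef, BD, σ1, σ2, σ3, one_apply, kroneckerMap_apply]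
      ring
    have hC : ρ (1,0) (1,0) = (1 - (c3:ℂ))/4 := by
      simp [hρdef, BD, σ1, σ2, σ3, one_apply, kroneckerMap_apply]
      ring
    have hD : ρ (1,1) (1,1) = (1 + (c3:ℂ))/4 := by
      simp [hρdef, BD, σ1, σ2, σ3, one_apply, kroneckerMap_apply]
      ring
    refine GR_BD hq' c3 ρ ?_ ?_ <;> rw [hA, hB, hC, hD] <;> ring
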